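/- Let T be a finite tree with positive edge weights and ρ > 0 under the postal model, and let B_Ctr = {u ∈ V(T) : b_time(u,T) ≤ b_time(v,T) for all v ∈ V(T)} be the set of broadcast centers. Then the subgraph of T induced by B_Ctr is a star, i.e., it has at most two vertices, or exactly one vertex of degree greater than one. -/

import Mathlib

/-!
Common definitions for the postal-model broadcasting problem on weighted trees.
-/

open SimpleGraph

namespace Postal

attribute [local instance] Classical.propDecidable

variable {V : Type*} [Fintype V] [DecidableEq V] (G : SimpleGraph V)

/-- The unique path (as a walk) between two vertices of a tree. -/
noncomputable def tPath (hG : G.IsTree) (u v : V) : G.Walk u v :=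
  (hG.existsUnique_path u v).exists.choose

/-- `z` lies in the open branch `O(x,y)`: the component of `T - x` containing `y`. -/
def inO (x y z : V) : Prop := ∃ p : G.Walk y z, x ∉ p.support

/-- The open branch `O(x,y)`. -/
def Obr (x y : V) : Set V := {z | inO G x y z}

/-- The closed branch `B(x,y) = T - O(x,y)` (it contains `x`). -/
def Bbr (x y : V) : Set V := {z | ¬ inO G x y z}

/-- The parent of `z` with respect to the root `u`: the penultimate vertex on the
unique `u`-to-`z` path. -/
noncomputable def parent (hG : G.IsTree) (u z : V) : V :=
  (tPath G hG u z).getVert ((tPath G hG u z).length - 1)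

/-- The receive time of `z` under schedule `σ` when `u` originates the message:
along the unique `u`-to-`z` path, each vertex is contacted in its slot `σ`,
contributing `σ·ρ` connection time plus the edge weight. -/
noncomputable def recvTime (hG : G.IsTree) (w : V → V → ℝ) (ρ : ℝ) (σ : V → ℕ) (u z : V) : ℝ :=
  ((tPath G hG u z).darts.map (fun d => (σ d.toProd.2 : ℝ) * ρ + w d.toProd.1 d.toProd.2)).sum

/-- A schedule `σ` is valid for source `u` broadcasting over the vertex set `S`:
every non-source vertex gets a slot `≥ 1`, and distinct vertices with the same
parent get distinct slots (a sender contacts its neighbors sequentially). -/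
def Valid (hG : G.IsTree) (σ : V → ℕ) (u : V) (S : Set V) : Prop :=
  (∀ z ∈ S, z ≠ u → 1 ≤ σ z) ∧
  (∀ z₁ ∈ S, ∀ z₂ ∈ S, z₁ ≠ u → z₂ ≠ u → z₁ ≠ z₂ →
    parent G hG u z₁ = parent G hG u z₂ → σ z₁ ≠ σ z₂)

/-- The minimum broadcast time for `u` to broadcast a message over the subtree
induced by `S` under the postal model with latency `ρ`. -/
noncomputable def bTime (hG : G.IsTree) (w : V → V → ℝ) (ρ : ℝ) (u : V) (S : Set V) : ℝ :=
  sInf {m | ∃ σ, Valid G hG σ u S ∧ m = sSup ((recvTime G hG w ρ σ u) '' S)}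

/-- Broadcast time over the whole tree. -/
noncomputable def bTimeT (hG : G.IsTree) (w : V → V → ℝ) (ρ : ℝ) (u : V) : ℝ :=
  bTime G hG w ρ u Set.univ

/-- The set of broadcast centers. -/
def BCtr (hG : G.IsTree) (w : V → V → ℝ) (ρ : ℝ) : Set V :=
  {u | ∀ v, bTimeT G hG w ρ u ≤ bTimeT G hG w ρ v}

/-- A prime broadcast center. -/
def IsPrime (hG : G.IsTree) (w : V → V → ℝ) (ρ : ℝ) (κ : V) : Prop :=
  κ ∈ BCtr G hG w ρ ∧
  ∀ u, G.Adj κ u → bTime G hG w ρ u (Bbr G u κ) ≤ bTime G hG w ρ κ (Bbr G κ u)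

/-- Hop distance: number of edges on the unique path. -/
noncomputable def hop (hG : G.IsTree) (x y : V) : ℕ := (tPath G hG x y).length

/-- Total weight of the unique `x`-to-`y` path. -/
noncomputable def pw (hG : G.IsTree) (w : V → V → ℝ) (x y : V) : ℝ :=
  ((tPath G hG x y).darts.map (fun d => w d.toProd.1 d.toProd.2)).sum

/-- Symmetric weight function. -/
def Wsymm (w : V → V → ℝ) : Prop := ∀ a b, w a b = w b a

/-- Positive weights on edges. -/
def Wpos (w : V → V → ℝ) : Prop := ∀ a b, G.Adj a b → 0 < w a b

/-- A scenario: a symmetric weight assignment within the uncertainty intervals. -/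
def Scenario (lo hi : V → V → ℝ) (w : V → V → ℝ) : Prop :=
  (∀ a b, w a b = w b a) ∧ ∀ a b, G.Adj a b → lo a b ≤ w a b ∧ w a b ≤ hi a b

/-- The maximum regret of `x`. -/
noncomputable def maxRegret (hG : G.IsTree) (lo hi : V → V → ℝ) (ρ : ℝ) (x : V) : ℝ :=
  sSup {r | ∃ w y, Scenario G lo hi w ∧ r = bTimeT G hG w ρ x - bTimeT G hG w ρ y}

/-- `w` is a worst-case scenario of the tree with respect to `x`. -/
def WorstCase (hG : G.IsTree) (lo hi : V → V → ℝ) (ρ : ℝ) (x : V) (w : V → V → ℝ) : Prop :=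
  Scenario G lo hi w ∧
  ∃ y, bTimeT G hG w ρ x - bTimeT G hG w ρ y = maxRegret G hG lo hi ρ x

/-- An edge `(a,b)` lies on the unique `x`-to-`y` path. -/
def onPath (hG : G.IsTree) (x y a b : V) : Prop :=
  a ∈ (tPath G hG x y).support ∧ b ∈ (tPath G hG x y).support

/-- The base scenario `α_{x,y}`: weight `hi` on the `x`-to-`y` path and on edges of
`B(y,x)`, weight `lo` elsewhere. -/
noncomputable def baseScenario (hG : G.IsTree) (lo hi : V → V → ℝ) (x y : V) : V → V → ℝ :=
  fun a b =>
    if onPath G hG x y a b ∨ (a ∈ Bbr G y x ∧ b ∈ Bbr G y x) then hi a b else lo a b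

/-- The value `w(y,v) + b_time(v, B(v,y))` of a neighbor `v` of `y`. -/
noncomputable def nval (hG : G.IsTree) (w : V → V → ℝ) (ρ : ℝ) (y v : V) : ℝ :=
  w y v + bTime G hG w ρ v (Bbr G v y)

/-- Scenario `β^j_{x,y}`: agrees with `α_{x,y}`, except that every edge in
`{(y,u_k)} ∪ E(B(u_k,y))` for `k > j` (with `u` the 1-based sorted enumeration
of the neighbors of `y` in `B(y,x)`) gets weight `lo`. -/
noncomputable def betaScenario (hG : G.IsTree) (lo hi : V → V → ℝ) (x y : V) {h : ℕ}
    (u : Fin h → V) (j : ℕ) : V → V → ℝ :=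
  fun a b =>
    if ∃ k : Fin h, j < (k : ℕ) + 1 ∧
        ((a = y ∧ b = u k) ∨ (b = y ∧ a = u k) ∨
          (a ∈ Bbr G (u k) y ∧ b ∈ Bbr G (u k) y)) then
      lo a b
    else baseScenario G hG lo hi x y a b

/-- Scenario `γ^j_{x,y}`: agrees with `α_{x,y}` on the edges in
`⋃_{1 ≤ k ≤ j} ({(y,u_k)} ∪ E(B(u_k,y)))` and with the scenario `s` elsewhere. -/
noncomputable def gammaScenario (hG : G.IsTree) (lo hi : V → V → ℝ) (s : V → V → ℝ)
    (x y : V) {h : ℕ} (u : Fin h → V) (j : ℕ) : V → V → ℝ :=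
  fun a b =>
    if ∃ k : Fin h, (k : ℕ) + 1 ≤ j ∧
        ((a = y ∧ b = u k) ∨ (b = y ∧ a = u k) ∨
          (a ∈ Bbr G (u k) y ∧ b ∈ Bbr G (u k) y)) then
      baseScenario G hG lo hi x y a b
    else s a b

/-- The set of neighbors of `y` inside the branch `B(y,x)`. -/
def nbrIn (x y : V) : Set V := {v | G.Adj y v ∧ v ∈ Bbr G y x}


/-! ### Auxiliary lemmas -/

section Aux
set_option linter.unusedSectionVars false

variable {G}

lemma mem_Bbr_self (x y : V) : y ∈ Bbr G y x := by
  rintro ⟨p, hp⟩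
  exact hp p.end_mem_support

lemma not_mem_Bbr {x y : V} (hne : y ≠ x) : x ∉ Bbr G y x := by
  intro h
  exact h ⟨SimpleGraph.Walk.nil, by simpa using hne⟩

lemma head_not_mem_tail {u v : V} {p : G.Walk u v} (hp : p.IsPath) :
    u ∉ p.support.tail := by
  have h := hp.support_nodup
  rw [p.support_eq_cons] at h
  exact (List.nodup_cons.mp h).1

lemma dropUntil_avoids {u v x : V} {p : G.Walk u v} (hp : p.IsPath)
    (hx : x ∈ p.support) (hxu : x ≠ u) :
    u ∉ (p.dropUntil x hx).support := by
  intro hu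
  have hspec := p.take_spec hx
  have hnd : p.support.Nodup := hp.support_nodup
  rw [← hspec, SimpleGraph.Walk.support_append] at hnd
  have h1 : u ∈ (p.takeUntil x hx).support := SimpleGraph.Walk.start_mem_support _
  have h2 : u ∈ (p.dropUntil x hx).support.tail := by
    have heq := (p.dropUntil x hx).support_eq_cons
    rw [heq] at hu
    rcases List.mem_cons.mp hu with h | h
    · exact absurd h.symm hxu
    · exact h
  exact (List.disjoint_of_nodup_append hnd) h1 h2

variable (hG : G.IsTree)
include hG

lemma tPath_isPath (u v : V) : (tPath G hG u v).IsPath :=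
  (hG.existsUnique_path u v).exists.choose_spec

lemma isPath_eq_tPath {u v : V} {p : G.Walk u v} (hp : p.IsPath) :
    p = tPath G hG u v :=
  (hG.existsUnique_path u v).unique hp (tPath_isPath hG u v)

lemma tPath_self (u : V) : tPath G hG u u = SimpleGraph.Walk.nil :=
  (isPath_eq_tPath hG (SimpleGraph.Walk.IsPath.nil)).symm

lemma tPath_adj {u v : V} (h : G.Adj u v) :
    tPath G hG u v = SimpleGraph.Walk.cons h SimpleGraph.Walk.nil := by
  refine (isPath_eq_tPath hG ?_).symm
  simp [SimpleGraph.Walk.cons_isPath_iff, h.ne]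

lemma tPath_cons {x y z : V} (hxy : G.Adj x y) (hz : z ∈ Bbr G y x) :
    tPath G hG x z = SimpleGraph.Walk.cons hxy (tPath G hG y z) := by
  set p := tPath G hG y z with hp
  have hpath : p.IsPath := tPath_isPath hG y z
  have hxs : x ∉ p.support := by
    intro hx
    exact hz ⟨p.dropUntil x hx, dropUntil_avoids hpath hx hxy.ne⟩
  exact (isPath_eq_tPath hG (hpath.cons hxs)).symm

lemma support_tPath_subset {a b z v : V} (hz : z ∈ Bbr G a b)
    (hv : v ∈ (tPath G hG a z).support) : v ∈ Bbr G a b := by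
  rintro ⟨r, hr⟩
  by_cases hva : v = a
  · exact hr (hva ▸ r.end_mem_support)
  · refine hz ⟨r.append ((tPath G hG a z).dropUntil v hv), ?_⟩
    rw [SimpleGraph.Walk.mem_support_append_iff]
    push_neg
    exact ⟨hr, dropUntil_avoids (tPath_isPath hG a z) hv hva⟩

lemma Obr_eq_Bbr {x y : V} (hxy : G.Adj x y) : Obr G x y = Bbr G y x := by
  ext z
  constructor
  · rintro ⟨r, hr⟩ ⟨s, hs⟩
    have hr' : (r.toPath : G.Walk y z).IsPath := r.toPath.2
    have hrx : x ∉ (r.toPath : G.Walk y z).support :=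
      fun h => hr (r.support_toPath_subset h)
    have h1 : SimpleGraph.Walk.cons hxy (r.toPath : G.Walk y z) = tPath G hG x z :=
      isPath_eq_tPath hG (hr'.cons hrx)
    have h2 : (s.toPath : G.Walk x z) = tPath G hG x z := isPath_eq_tPath hG s.toPath.2
    have hy : y ∈ (tPath G hG x z).support := by
      rw [← h1]
      simp
    rw [← h2] at hy
    exact hs (s.support_toPath_subset hy)
  · intro hz
    have h := tPath_cons hG hxy hz
    have hpath := tPath_isPath hG x z
    rw [h, SimpleGraph.Walk.cons_isPath_iff] at hpath
    exact ⟨tPath G hG y z, hpath.2⟩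

lemma Obr_disjoint {x y y' z : V} (hxy : G.Adj x y) (hxy' : G.Adj x y')
    (hne : y ≠ y') (h1 : z ∈ Obr G x y) : z ∉ Obr G x y' := by
  rintro ⟨r', hr'⟩
  obtain ⟨r, hr⟩ := h1
  set q := (r.append r'.reverse).toPath with hq
  have hqs : x ∉ (q : G.Walk y y').support := by
    intro hx
    have h := (r.append r'.reverse).support_toPath_subset hx
    rw [SimpleGraph.Walk.mem_support_append_iff] at h
    rcases h with h | h
    · exact hr h
    · rw [SimpleGraph.Walk.support_reverse] at h
      exact hr' (List.mem_reverse.mp h)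
  have hW : (SimpleGraph.Walk.cons hxy.symm (SimpleGraph.Walk.cons hxy' SimpleGraph.Walk.nil) :
      G.Walk y y').IsPath := by
    simp [SimpleGraph.Walk.cons_isPath_iff, hxy.ne', hxy'.ne, hne]
  have e1 := isPath_eq_tPath hG q.2
  have e2 := isPath_eq_tPath hG hW
  have hx : x ∈ (q : G.Walk y y').support := by
    rw [e1, ← e2]
    simp
  exact hqs hx

lemma Bbr_subset_Bbr {x y y' : V} (hxy : G.Adj x y) (hxy' : G.Adj x y')
    (hne : y ≠ y') : Bbr G y x ⊆ Bbr G x y' := by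
  intro z hz
  rw [← Obr_eq_Bbr hG hxy] at hz
  exact Obr_disjoint hG hxy hxy' hne hz

lemma branch_mono {x y y₂ : V} (hxy : G.Adj x y) (hyy : G.Adj y y₂) (hne : y₂ ≠ x) :
    Bbr G y₂ y ⊆ Bbr G y x := by
  intro z hz
  rw [← Obr_eq_Bbr hG hyy] at hz
  rw [← Obr_eq_Bbr hG hxy]
  obtain ⟨r, hr⟩ := hz
  set p := (r.toPath : G.Walk y₂ z) with hp
  have hpp : p.IsPath := r.toPath.2
  have hyp : y ∉ p.support := fun h => hr (r.support_toPath_subset h)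
  have hxp : x ∉ p.support := by
    intro hx
    set q := p.takeUntil x hx with hqdef
    have hq : q.IsPath := hpp.takeUntil hx
    have hyq : y ∉ q.support := fun h => hyp (p.support_takeUntil_subset hx h)
    have e1 := isPath_eq_tPath hG (p := SimpleGraph.Walk.cons hyy q) (hq.cons hyq)
    rw [tPath_adj hG hxy.symm] at e1
    have hlen := congrArg SimpleGraph.Walk.length e1
    simp only [SimpleGraph.Walk.length_cons, SimpleGraph.Walk.length_nil] at hlen
    exact hne (SimpleGraph.Walk.eq_of_length_eq_zero (p := q) (by omega))
  refine ⟨SimpleGraph.Walk.cons hyy p, ?_⟩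
  rw [SimpleGraph.Walk.support_cons]
  intro hmem
  rcases List.mem_cons.mp hmem with h | h
  · exact hxy.ne h
  · exact hxp h


lemma parent_eq {x y z : V} (hxy : G.Adj x y) (hz : z ∈ Bbr G y x) (hzy : z ≠ y) :
    parent G hG x z = parent G hG y z := by
  have hl : (tPath G hG y z).length ≠ 0 := by
    intro h
    exact hzy (SimpleGraph.Walk.eq_of_length_eq_zero (p := tPath G hG y z) h).symm
  unfold parent
  rw [tPath_cons hG hxy hz]
  rw [SimpleGraph.Walk.length_cons, Nat.add_sub_cancel,
    SimpleGraph.Walk.getVert_cons _ hxy hl]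

lemma parent_of_adj {x y : V} (hxy : G.Adj x y) : parent G hG x y = x := by
  unfold parent
  rw [tPath_adj hG hxy]
  simp

lemma parent_mem_support (u z : V) : parent G hG u z ∈ (tPath G hG u z).support := by
  rw [SimpleGraph.Walk.mem_support_iff_exists_getVert]
  exact ⟨(tPath G hG u z).length - 1, rfl, Nat.sub_le _ _⟩

lemma parent_dart {x z : V} (p : G.Walk x z) (hp : p.IsPath) :
    ∀ d ∈ p.darts, parent G hG x d.toProd.2 = d.toProd.1 := by
  induction p with
  | nil => simp
  | @cons a b c h q ih =>
    intro d hd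
    rw [SimpleGraph.Walk.darts_cons] at hd
    have hp' := (SimpleGraph.Walk.cons_isPath_iff h q).mp hp
    rcases List.mem_cons.mp hd with rfl | hd
    · exact parent_of_adj hG h
    · have hs : d.toProd.2 ∈ q.support :=
        SimpleGraph.Walk.dart_snd_mem_support_of_mem_darts q hd
      have h2 : d.toProd.2 ∈ Bbr G b a := by
        rw [← Obr_eq_Bbr hG h]
        exact ⟨q.takeUntil _ hs, fun hval => hp'.2 (q.support_takeUntil_subset hs hval)⟩
      have hne : d.toProd.2 ≠ b := by
        intro hc
        have hmem : d.toProd.2 ∈ q.support.tail := by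
          rw [← SimpleGraph.Walk.map_snd_darts]
          exact List.mem_map_of_mem hd
        rw [hc] at hmem
        exact head_not_mem_tail hp'.1 hmem
      rw [parent_eq hG h h2 hne]
      exact ih hp'.1 d hd

section Recv

variable (wt : V → V → ℝ) (ρ : ℝ) (σ : V → ℕ)

lemma recvTime_self (u : V) : recvTime G hG wt ρ σ u u = 0 := by
  unfold recvTime
  rw [tPath_self hG]
  simp

lemma recvTime_cons {x y z : V} (hxy : G.Adj x y) (hz : z ∈ Bbr G y x) :
    recvTime G hG wt ρ σ x z = (σ y : ℝ) * ρ + wt x y + recvTime G hG wt ρ σ y z := by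
  unfold recvTime
  rw [tPath_cons hG hxy hz]
  simp only [SimpleGraph.Walk.darts_cons, List.map_cons, List.sum_cons]

lemma recvTime_congr {σ' : V → ℕ} {u z : V}
    (h : ∀ a ∈ (tPath G hG u z).support.tail, σ a = σ' a) :
    recvTime G hG wt ρ σ u z = recvTime G hG wt ρ σ' u z := by
  unfold recvTime
  congr 1
  apply List.map_congr_left
  intro d hd
  have hmem : d.toProd.2 ∈ (tPath G hG u z).support.tail := by
    rw [← SimpleGraph.Walk.map_snd_darts]
    exact List.mem_map_of_mem hd
  rw [h _ hmem]

lemma recvTime_shift {κ z : V} (hz : κ ≠ z) :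
    recvTime G hG wt ρ (fun a => σ a + if parent G hG κ a = κ then 1 else 0) κ z
      = recvTime G hG wt ρ σ κ z + ρ := by
  obtain ⟨v, h, q, hq⟩ := SimpleGraph.Walk.exists_eq_cons_of_ne hz (tPath G hG κ z)
  have hp : (tPath G hG κ z).IsPath := tPath_isPath hG κ z
  have hp2 := hp
  rw [hq, SimpleGraph.Walk.cons_isPath_iff] at hp2
  have h1 : parent G hG κ v = κ := parent_of_adj hG h
  have h2 : ∀ d ∈ q.darts, parent G hG κ d.toProd.2 ≠ κ := by
    intro d hd
    have he := parent_dart hG (tPath G hG κ z) hp d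
      (by rw [hq, SimpleGraph.Walk.darts_cons]; exact List.mem_cons_of_mem _ hd)
    rw [he]
    intro hc
    exact hp2.2 (hc ▸ SimpleGraph.Walk.dart_fst_mem_support_of_mem_darts q hd)
  unfold recvTime
  rw [hq]
  simp only [SimpleGraph.Walk.darts_cons, List.map_cons, List.sum_cons]
  have h3 : (q.darts.map (fun d =>
      ((σ d.toProd.2 + if parent G hG κ d.toProd.2 = κ then 1 else 0 : ℕ) : ℝ) * ρ
        + wt d.toProd.1 d.toProd.2)).sum
      = (q.darts.map (fun d => (σ d.toProd.2 : ℝ) * ρ + wt d.toProd.1 d.toProd.2)).sum := by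
    congr 1
    apply List.map_congr_left
    intro d hd
    rw [if_neg (h2 d hd)]
    norm_num
  rw [h3, h1]
  simp
  ring

end Recv

section BT

variable (wt : V → V → ℝ) {ρ : ℝ}

lemma exists_valid (u : V) (S : Set V) : ∃ σ, Valid G hG σ u S := by
  refine ⟨fun z => (Fintype.equivFin V z : ℕ) + 1, fun z _ _ => le_add_self, ?_⟩
  intro z₁ _ z₂ _ _ _ hne _
  intro h
  apply hne
  have h' : (Fintype.equivFin V z₁ : ℕ) = (Fintype.equivFin V z₂ : ℕ) := by simpa using h
  exact (Fintype.equivFin V).injective (Fin.ext h')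

lemma bTime_set_nonempty (u : V) (S : Set V) :
    {m | ∃ σ, Valid G hG σ u S ∧ m = sSup (recvTime G hG wt ρ σ u '' S)}.Nonempty := by
  obtain ⟨σ, hσ⟩ := exists_valid hG u S
  exact ⟨_, σ, hσ, rfl⟩

lemma sSup_recv_nonneg {u : V} {S : Set V} (hu : u ∈ S) (σ : V → ℕ) :
    0 ≤ sSup (recvTime G hG wt ρ σ u '' S) := by
  have h0 : recvTime G hG wt ρ σ u u = 0 := recvTime_self hG wt ρ σ u
  have := le_csSup ((S.toFinite.image (recvTime G hG wt ρ σ u)).bddAbove) (Set.mem_image_of_mem (recvTime G hG wt ρ σ u) hu)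
  rw [h0] at this
  exact this

lemma bddBelow_bTime_set {u : V} {S : Set V} (hu : u ∈ S) :
    BddBelow {m | ∃ σ, Valid G hG σ u S ∧ m = sSup (recvTime G hG wt ρ σ u '' S)} := by
  refine ⟨0, ?_⟩
  rintro m ⟨σ, hσ, rfl⟩
  exact sSup_recv_nonneg hG wt hu σ

lemma bTime_nonneg {u : V} {S : Set V} (hu : u ∈ S) : 0 ≤ bTime G hG wt ρ u S := by
  apply le_csInf (bTime_set_nonempty hG wt u S)
  rintro m ⟨σ, hσ, rfl⟩
  exact sSup_recv_nonneg hG wt hu σ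

lemma bTime_le_sSup {u : V} {S : Set V} (hu : u ∈ S) {σ : V → ℕ} (hσ : Valid G hG σ u S) :
    bTime G hG wt ρ u S ≤ sSup (recvTime G hG wt ρ σ u '' S) :=
  csInf_le (bddBelow_bTime_set hG wt hu) ⟨σ, hσ, rfl⟩

lemma le_bTime {u : V} {S : Set V} {c : ℝ}
    (h : ∀ σ, Valid G hG σ u S → c ≤ sSup (recvTime G hG wt ρ σ u '' S)) :
    c ≤ bTime G hG wt ρ u S := by
  apply le_csInf (bTime_set_nonempty hG wt u S)
  rintro m ⟨σ, hσ, rfl⟩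
  exact h σ hσ

lemma exists_valid_near {u : V} (S : Set V) {ε : ℝ} (hε : 0 < ε) :
    ∃ σ, Valid G hG σ u S ∧
      sSup (recvTime G hG wt ρ σ u '' S) < bTime G hG wt ρ u S + ε := by
  have hlt : bTime G hG wt ρ u S < bTime G hG wt ρ u S + ε := lt_add_of_pos_right _ hε
  obtain ⟨m, hm, hmlt⟩ := exists_lt_of_csInf_lt (bTime_set_nonempty hG wt u S) hlt
  obtain ⟨σ, hσ, rfl⟩ := hm
  exact ⟨σ, hσ, hmlt⟩

lemma bTime_lower {x y : V} {S : Set V} (hρ : 0 < ρ) (hxy : G.Adj x y)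
    (hsub : Bbr G y x ⊆ S) :
    ρ + wt x y + bTime G hG wt ρ y (Bbr G y x) ≤ bTime G hG wt ρ x S := by
  apply le_bTime hG wt
  intro σ hσ
  set m := sSup (recvTime G hG wt ρ σ x '' S) with hm
  have hyB : y ∈ Bbr G y x := mem_Bbr_self x y
  have hxB : x ∉ Bbr G y x := not_mem_Bbr hxy.ne'
  have hval : Valid G hG σ y (Bbr G y x) := by
    constructor
    · intro z hz _
      exact hσ.1 z (hsub hz) (fun h => hxB (h ▸ hz))
    · intro z₁ hz₁ z₂ hz₂ h1 h2 hne hpar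
      refine hσ.2 z₁ (hsub hz₁) z₂ (hsub hz₂) (fun h => hxB (h ▸ hz₁))
        (fun h => hxB (h ▸ hz₂)) hne ?_
      rw [parent_eq hG hxy hz₁ h1, parent_eq hG hxy hz₂ h2]
      exact hpar
  have hσy : (1 : ℝ) ≤ (σ y : ℝ) := by
    exact_mod_cast hσ.1 y (hsub hyB) hxy.ne'
  have key : ∀ z ∈ Bbr G y x, recvTime G hG wt ρ σ y z ≤ m - (ρ + wt x y) := by
    intro z hz
    have hrec := recvTime_cons hG wt ρ σ hxy hz
    have hle : recvTime G hG wt ρ σ x z ≤ m :=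
      le_csSup ((S.toFinite.image (recvTime G hG wt ρ σ x)).bddAbove)
        (Set.mem_image_of_mem _ (hsub hz))
    nlinarith [hρ.le]
  have h1 : bTime G hG wt ρ y (Bbr G y x)
      ≤ sSup (recvTime G hG wt ρ σ y '' Bbr G y x) := bTime_le_sSup hG wt hyB hval
  have h2 : sSup (recvTime G hG wt ρ σ y '' Bbr G y x) ≤ m - (ρ + wt x y) := by
    apply csSup_le ⟨_, Set.mem_image_of_mem _ hyB⟩
    rintro r ⟨z, hz, rfl⟩
    exact key z hz
  linarith

lemma bTime_lower_univ {x y : V} (hρ : 0 < ρ) (hxy : G.Adj x y) :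
    ρ + wt x y + bTime G hG wt ρ y (Bbr G y x) ≤ bTimeT G hG wt ρ x :=
  bTime_lower hG wt hρ hxy (Set.subset_univ _)

lemma bTime_lower_branch {x y y' : V} (hρ : 0 < ρ) (hxy : G.Adj x y) (hxy' : G.Adj x y')
    (hne : y ≠ y') :
    ρ + wt x y + bTime G hG wt ρ y (Bbr G y x) ≤ bTime G hG wt ρ x (Bbr G x y') :=
  bTime_lower hG wt hρ hxy (Bbr_subset_Bbr hG hxy hxy' hne)

lemma bTime_upper {κ y : V} (hρ : 0 < ρ) (hxy : G.Adj κ y) :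
    bTimeT G hG wt ρ κ ≤ max (ρ + wt κ y + bTime G hG wt ρ y (Bbr G y κ))
      (ρ + bTime G hG wt ρ κ (Bbr G κ y)) := by
  set t1 := bTime G hG wt ρ y (Bbr G y κ) with ht1
  set t2 := bTime G hG wt ρ κ (Bbr G κ y) with ht2
  set R := max (ρ + wt κ y + t1) (ρ + t2) with hR
  have hyB₁ : y ∈ Bbr G y κ := mem_Bbr_self κ y
  have hκB₂ : κ ∈ Bbr G κ y := mem_Bbr_self y κ
  have hκB₁ : κ ∉ Bbr G y κ := not_mem_Bbr hxy.ne'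
  have main : ∀ ε : ℝ, 0 < ε → bTimeT G hG wt ρ κ ≤ R + ε := by
    intro ε hε
    obtain ⟨σ₁, hv₁, hs₁⟩ := exists_valid_near hG wt (u := y) (ρ := ρ) (Bbr G y κ) hε
    obtain ⟨σ₂, hv₂, hs₂⟩ := exists_valid_near hG wt (u := κ) (ρ := ρ) (Bbr G κ y) hε
    have hOB : Obr G κ y = Bbr G y κ := Obr_eq_Bbr hG hxy
    have hdisj : ∀ z, z ∈ Bbr G y κ → z ∉ Bbr G κ y := by
      intro z h1 h2
      rw [← hOB] at h1
      exact h2 h1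
    have hcover : ∀ z, z ∉ Bbr G y κ → z ∈ Bbr G κ y := by
      intro z h1
      by_contra h2
      have h3 : z ∈ Obr G κ y := not_not.mp h2
      rw [hOB] at h3
      exact h1 h3
    set σ : V → ℕ := fun z => if z ∈ Bbr G y κ then (if z = y then 1 else σ₁ z)
      else σ₂ z + (if parent G hG κ z = κ then 1 else 0) with hσdef
    have hσy : σ y = 1 := by simp [hσdef, hyB₁]
    have hσB₁ : ∀ z ∈ Bbr G y κ, z ≠ y → σ z = σ₁ z := by
      intro z hz hzy
      simp [hσdef, hz, hzy]
    have hσB₂ : ∀ z, z ∉ Bbr G y κ →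
        σ z = σ₂ z + (if parent G hG κ z = κ then 1 else 0) := by
      intro z hz
      simp [hσdef, hz]
    have hpar1 : ∀ z ∈ Bbr G y κ, z ≠ y → parent G hG κ z ∈ Bbr G y κ := by
      intro z hz hzy
      rw [parent_eq hG hxy hz hzy]
      exact support_tPath_subset hG hz (parent_mem_support hG y z)
    have hpar2 : ∀ z ∈ Bbr G κ y, parent G hG κ z ∈ Bbr G κ y := fun z hz =>
      support_tPath_subset hG hz (parent_mem_support hG κ z)
    have hpy : parent G hG κ y = κ := parent_of_adj hG hxy
    have hval : Valid G hG σ κ Set.univ := by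
      constructor
      · intro z _ hzκ
        by_cases h1 : z ∈ Bbr G y κ
        · by_cases h2 : z = y
          · rw [h2, hσy]
          · rw [hσB₁ z h1 h2]
            exact hv₁.1 z h1 h2
        · rw [hσB₂ z h1]
          exact le_add_right (hv₂.1 z (hcover z h1) hzκ)
      · intro z₁ _ z₂ _ hz₁κ hz₂κ hne hpar
        by_cases h1 : z₁ ∈ Bbr G y κ <;> by_cases h2 : z₂ ∈ Bbr G y κ
        · -- both in B₁
          by_cases hy1 : z₁ = y <;> by_cases hy2 : z₂ = y
          · exact absurd (hy1.trans hy2.symm) hne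
          · exfalso
            apply hκB₁
            have hpp : parent G hG κ z₂ = κ := by rw [← hpar, hy1, hpy]
            have hmem := hpar1 z₂ h2 hy2
            rw [hpp] at hmem
            exact hmem
          · exfalso
            apply hκB₁
            have hpp : parent G hG κ z₁ = κ := by rw [hpar, hy2, hpy]
            have hmem := hpar1 z₁ h1 hy1
            rw [hpp] at hmem
            exact hmem
          · rw [hσB₁ z₁ h1 hy1, hσB₁ z₂ h2 hy2]
            apply hv₁.2 z₁ h1 z₂ h2 hy1 hy2 hne
            rw [← parent_eq hG hxy h1 hy1, ← parent_eq hG hxy h2 hy2]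
            exact hpar
        · -- z₁ ∈ B₁, z₂ ∈ B₂
          by_cases hy1 : z₁ = y
          · have hp2 : parent G hG κ z₂ = κ := by rw [← hpar, hy1, hpy]
            have : σ z₂ = σ₂ z₂ + 1 := by rw [hσB₂ z₂ h2, if_pos hp2]
            rw [this, hy1, hσy]
            have := hv₂.1 z₂ (hcover z₂ h2) hz₂κ
            omega
          · exfalso
            exact hdisj _ (hpar1 z₁ h1 hy1) (hpar ▸ hpar2 z₂ (hcover z₂ h2))
        · -- z₂ ∈ B₁, z₁ ∈ B₂
          by_cases hy2 : z₂ = y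
          · have hp1 : parent G hG κ z₁ = κ := by rw [hpar, hy2, hpy]
            have : σ z₁ = σ₂ z₁ + 1 := by rw [hσB₂ z₁ h1, if_pos hp1]
            rw [this, hy2, hσy]
            have := hv₂.1 z₁ (hcover z₁ h1) hz₁κ
            omega
          · exfalso
            have hmem := hpar2 z₁ (hcover z₁ h1)
            rw [hpar] at hmem
            exact hdisj _ (hpar1 z₂ h2 hy2) hmem
        · -- both in B₂
          rw [hσB₂ z₁ h1, hσB₂ z₂ h2, hpar]
          have hd : σ₂ z₁ ≠ σ₂ z₂ :=
            hv₂.2 z₁ (hcover z₁ h1) z₂ (hcover z₂ h2) hz₁κ hz₂κ hne hpar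
          omega
    have hbound : ∀ z : V, recvTime G hG wt ρ σ κ z ≤ R + ε := by
      intro z
      have ht2nn : 0 ≤ t2 := bTime_nonneg hG wt hκB₂
      have hR2 : ρ + t2 ≤ R := le_max_right _ _
      by_cases hzκ : z = κ
      · rw [hzκ, recvTime_self hG wt ρ σ κ]
        linarith
      by_cases h1 : z ∈ Bbr G y κ
      · have hrec := recvTime_cons hG wt ρ σ hxy h1
        have hcg : recvTime G hG wt ρ σ y z = recvTime G hG wt ρ σ₁ y z := by
          apply recvTime_congr hG wt ρ σ
          intro a ha
          have has : a ∈ (tPath G hG y z).support := List.mem_of_mem_tail ha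
          have haB : a ∈ Bbr G y κ := support_tPath_subset hG h1 has
          have hay : a ≠ y := by
            intro h
            exact head_not_mem_tail (tPath_isPath hG y z) (h ▸ ha)
          exact hσB₁ a haB hay
        have hle : recvTime G hG wt ρ σ₁ y z
            ≤ sSup (recvTime G hG wt ρ σ₁ y '' Bbr G y κ) :=
          le_csSup (((Bbr G y κ).toFinite.image _).bddAbove) (Set.mem_image_of_mem _ h1)
        have hR1 : ρ + wt κ y + t1 ≤ R := le_max_left _ _
        rw [hrec, hσy, hcg]
        push_cast
        nlinarith [hs₁, hle]
      · have hzB₂ : z ∈ Bbr G κ y := hcover z h1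
        have hcg : recvTime G hG wt ρ σ κ z = recvTime G hG wt ρ
            (fun a => σ₂ a + if parent G hG κ a = κ then 1 else 0) κ z := by
          apply recvTime_congr hG wt ρ σ
          intro a ha
          have has : a ∈ (tPath G hG κ z).support := List.mem_of_mem_tail ha
          have haB : a ∈ Bbr G κ y := support_tPath_subset hG hzB₂ has
          exact hσB₂ a (fun h => hdisj a h haB)
        have hsh := recvTime_shift hG wt ρ σ₂ (fun h => hzκ h.symm)
        have hle : recvTime G hG wt ρ σ₂ κ z
            ≤ sSup (recvTime G hG wt ρ σ₂ κ '' Bbr G κ y) :=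
          le_csSup (((Bbr G κ y).toFinite.image _).bddAbove) (Set.mem_image_of_mem _ hzB₂)
        rw [hcg, hsh]
        linarith [hs₂, hle]
    calc bTimeT G hG wt ρ κ ≤ sSup (recvTime G hG wt ρ σ κ '' Set.univ) :=
          bTime_le_sSup hG wt (Set.mem_univ κ) hval
      _ ≤ R + ε := by
          apply csSup_le ⟨_, Set.mem_image_of_mem _ (Set.mem_univ κ)⟩
          rintro r ⟨z, _, rfl⟩
          exact hbound z
  by_contra hcon
  push_neg at hcon
  have := main ((bTimeT G hG wt ρ κ - R) / 2) (by linarith)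
  linarith

lemma bTime_move {u v : V} (hρ : 0 < ρ) (hsym : Wsymm wt) (hw : 0 < wt u v)
    (hadj : G.Adj u v)
    (ht : bTime G hG wt ρ u (Bbr G u v) < bTime G hG wt ρ v (Bbr G v u)) :
    bTimeT G hG wt ρ v ≤ bTimeT G hG wt ρ u := by
  have h1 := bTime_upper hG wt hρ hadj.symm
  have h2 := bTime_lower_univ hG wt hρ hadj
  refine h1.trans (max_le ?_ ?_)
  · have := hsym v u
    linarith
  · linarith

lemma iter_lower (hρ : 0 < ρ) (hsym : Wsymm wt) (hpos : Wpos G wt) (κ : V) :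
    ∀ n : ℕ, ∀ x y : V, G.Adj x y → κ ∈ Bbr G y x → (tPath G hG y κ).length = n →
      y = κ ∨ ∃ y', G.Adj κ y' ∧
        (n : ℝ) * ρ + wt κ y' + bTime G hG wt ρ κ (Bbr G κ y')
          ≤ bTime G hG wt ρ y (Bbr G y x) := by
  intro n
  induction n with
  | zero =>
    intro x y _ _ hlen
    exact Or.inl (SimpleGraph.Walk.eq_of_length_eq_zero (p := tPath G hG y κ) hlen)
  | succ n ih =>
    intro x y hxy hκB hlen
    right
    have hyκ : y ≠ κ := by
      intro h
      rw [h, tPath_self hG] at hlen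
      simp at hlen
    obtain ⟨y₂, h, q, hq⟩ := SimpleGraph.Walk.exists_eq_cons_of_ne hyκ (tPath G hG y κ)
    have hp := tPath_isPath hG y κ
    have hp2 := hp
    rw [hq, SimpleGraph.Walk.cons_isPath_iff] at hp2
    have hqe : q = tPath G hG y₂ κ := isPath_eq_tPath hG hp2.1
    have hqlen : (tPath G hG y₂ κ).length = n := by
      rw [← hqe]
      have := congrArg SimpleGraph.Walk.length hq
      rw [SimpleGraph.Walk.length_cons] at this
      omega
    have hy₂supp : y₂ ∈ (tPath G hG y κ).support := by
      rw [hq, SimpleGraph.Walk.support_cons]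
      exact List.mem_cons_of_mem _ q.start_mem_support
    have hy₂x : y₂ ≠ x := by
      intro hc
      have := support_tPath_subset hG hκB hy₂supp
      rw [hc] at this
      exact not_mem_Bbr hxy.ne' this
    have hκB₂ : κ ∈ Bbr G y₂ y := by
      rintro ⟨r, hr⟩
      apply hr
      apply r.support_toPath_subset
      rw [isPath_eq_tPath hG (r.toPath.2 : (r.toPath : G.Walk y κ).IsPath)]
      exact hy₂supp
    have hstep : ρ + wt y y₂ + bTime G hG wt ρ y₂ (Bbr G y₂ y)
        ≤ bTime G hG wt ρ y (Bbr G y x) :=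
      bTime_lower hG wt hρ h (branch_mono hG hxy h hy₂x)
    rcases ih y y₂ h hκB₂ hqlen with h0 | ⟨y', hadj', hle⟩
    · refine ⟨y, (h0 ▸ h).symm, ?_⟩
      have hn : n = 0 := by
        rw [h0, tPath_self hG] at hqlen
        simpa using hqlen.symm
      rw [h0] at hstep
      have hw := hsym y κ
      rw [hn]
      push_cast
      linarith
    · refine ⟨y', hadj', ?_⟩
      have hwpos : 0 < wt y y₂ := hpos y y₂ h
      push_cast
      linarith

lemma exists_star_center (hρ : 0 < ρ) (hsym : Wsymm wt) (hposw : Wpos G wt)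
    (hcard : 1 < Fintype.card V) :
    ∃ κ ∈ BCtr G hG wt ρ, ∀ x ∈ BCtr G hG wt ρ, x ≠ κ → G.Adj κ x := by
  have hnbr : ∀ x : V, ∃ y, G.Adj x y := by
    intro x
    obtain ⟨z, hz⟩ := Fintype.exists_ne_of_one_lt_card hcard x
    obtain ⟨r⟩ := hG.isConnected.preconnected x z
    cases r with
    | nil => exact absurd rfl hz
    | cons h _ => exact ⟨_, h⟩
  have hBne : (BCtr G hG wt ρ).Nonempty := by
    have : Nonempty V := hG.isConnected.nonempty
    obtain ⟨x⟩ := this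
    obtain ⟨c, _, hc⟩ := Set.exists_min_image Set.univ (bTimeT G hG wt ρ)
      Set.finite_univ ⟨x, Set.mem_univ x⟩
    exact ⟨c, fun v => hc v (Set.mem_univ v)⟩
  set cv : V → V → ℝ := fun x v => wt x v + bTime G hG wt ρ v (Bbr G v x) with hcv
  set Fs : V → Set ℝ := fun x => cv x '' {v | G.Adj x v} with hFs
  set F : V → ℝ := fun x => sSup (Fs x) with hF
  have hFsne : ∀ x, (Fs x).Nonempty := by
    intro x
    obtain ⟨y, hy⟩ := hnbr x
    exact ⟨cv x y, Set.mem_image_of_mem _ hy⟩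
  have hFsfin : ∀ x, (Fs x).Finite := fun x => Set.toFinite _
  have hle_F : ∀ x v, G.Adj x v → cv x v ≤ F x := by
    intro x v hv
    exact le_csSup (hFsfin x).bddAbove (Set.mem_image_of_mem _ hv)
  obtain ⟨κ, hκB, hκmin⟩ := Set.exists_min_image (BCtr G hG wt ρ) F (Set.toFinite _) hBne
  obtain ⟨vs, hvsadj, hvsmax⟩ := Set.exists_max_image {v | G.Adj κ v} (cv κ)
    (Set.toFinite _) (hnbr κ)
  have hauto : ∀ v, G.Adj κ v → v ≠ vs →
      bTime G hG wt ρ v (Bbr G v κ) ≤ bTime G hG wt ρ κ (Bbr G κ v) := by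
    intro v hv hne
    have h1 := bTime_lower_branch hG wt hρ hvsadj hv (fun hc => hne hc.symm)
    have h2 : cv κ v ≤ cv κ vs := hvsmax v hv
    have hwv := hposw κ v hv
    simp only [hcv] at h1 h2 ⊢
    linarith
  have hprime : ∀ v, G.Adj κ v →
      bTime G hG wt ρ v (Bbr G v κ) ≤ bTime G hG wt ρ κ (Bbr G κ v) := by
    by_contra hcon
    push_neg at hcon
    obtain ⟨v, hadj, hlt⟩ := hcon
    have hveq : v = vs := by
      by_contra hne
      exact absurd (hauto v hadj hne) (not_le.mpr hlt)
    subst hveq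
    have hmove := bTime_move hG wt hρ hsym (hposw κ v hadj) hadj hlt
    have hvB : v ∈ BCtr G hG wt ρ := fun z => hmove.trans (hκB z)
    have hFlt : F v < F κ := by
      have hmem : F v ∈ Fs v := (hFsne v).csSup_mem (hFsfin v)
      obtain ⟨z, hz, hzeq⟩ := hmem
      have hκF : cv κ v ≤ F κ := hle_F κ v hadj
      rw [← hzeq]
      by_cases hzκ : z = κ
      · subst hzκ
        have hs1 := hsym v z
        simp only [hcv] at hκF ⊢
        linarith
      · have h1 := bTime_lower_branch hG wt hρ hz hadj.symm hzκ
        have hwz : 0 < wt κ v := hposw κ v hadj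
        simp only [hcv] at hκF h1 ⊢
        linarith
    exact absurd (hκmin v hvB) (not_le.mpr hFlt)
  refine ⟨κ, hκB, ?_⟩
  intro x hxB hxκ
  by_contra hnadj
  obtain ⟨y₁, h, q, hq⟩ := SimpleGraph.Walk.exists_eq_cons_of_ne hxκ (tPath G hG x κ)
  have hy₁supp : y₁ ∈ (tPath G hG x κ).support := by
    rw [hq, SimpleGraph.Walk.support_cons]
    exact List.mem_cons_of_mem _ q.start_mem_support
  have hκBr : κ ∈ Bbr G y₁ x := by
    rintro ⟨r, hr⟩
    apply hr
    apply r.support_toPath_subset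
    rw [isPath_eq_tPath hG (r.toPath.2 : (r.toPath : G.Walk x κ).IsPath)]
    exact hy₁supp
  have hstep := bTime_lower_univ hG wt hρ h
  rcases iter_lower hG wt hρ hsym hposw κ (tPath G hG y₁ κ).length x y₁ h hκBr rfl
    with h0 | ⟨y', hadj', hle⟩
  · exact hnadj ((h0 ▸ h).symm)
  · have hn1 : 1 ≤ (tPath G hG y₁ κ).length := by
      rcases Nat.eq_zero_or_pos (tPath G hG y₁ κ).length with h' | h'
      · exact absurd ((SimpleGraph.Walk.eq_of_length_eq_zero
          (p := tPath G hG y₁ κ) h' ▸ h).symm) hnadj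
      · exact h'
    have hub := bTime_upper hG wt hρ hadj'
    have hpr := hprime y' hadj'
    have hwy' : 0 < wt κ y' := hposw κ y' hadj'
    have hbκ : bTimeT G hG wt ρ κ
        ≤ ρ + wt κ y' + bTime G hG wt ρ κ (Bbr G κ y') :=
      hub.trans (max_le (by linarith) (by linarith))
    have hwxy₁ : 0 < wt x y₁ := hposw x y₁ h
    have hxmin : bTimeT G hG wt ρ x ≤ bTimeT G hG wt ρ κ := hxB κ
    have hnρ : ρ ≤ ((tPath G hG y₁ κ).length : ℝ) * ρ := by
      have h1 : (1 : ℝ) ≤ ((tPath G hG y₁ κ).length : ℝ) := by exact_mod_cast hn1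
      nlinarith
    linarith

end BT

end Aux
/-- The subgraph of `T` induced by the set of broadcast centers is
a star: it has at most two vertices, or exactly one vertex of (induced) degree
greater than one. -/
theorem stmt2 {V : Type*} [Fintype V] [DecidableEq V] (G : SimpleGraph V) (hG : G.IsTree)
    (w : V → V → ℝ) (hsym : Wsymm w) (hpos : Wpos G w) (ρ : ℝ) (hρ : 0 < ρ) :
    (BCtr G hG w ρ).ncard ≤ 2 ∨
      ∃! c, c ∈ BCtr G hG w ρ ∧ 1 < {u | u ∈ BCtr G hG w ρ ∧ G.Adj c u}.ncard := by
  rcases le_or_gt ((BCtr G hG w ρ).ncard) 2 with h2 | h2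
  · exact Or.inl h2
  · right
    have hfin : (BCtr G hG w ρ).Finite := Set.toFinite _
    have hcard : 1 < Fintype.card V := by
      have hle := Set.ncard_le_ncard (Set.subset_univ (BCtr G hG w ρ)) Set.finite_univ
      rw [Set.ncard_univ, Nat.card_eq_fintype_card] at hle
      omega
    obtain ⟨κ, hκB, hstar⟩ := exists_star_center hG w hρ hsym hpos hcard
    refine ⟨κ, ⟨hκB, ?_⟩, ?_⟩
    · have hsub : BCtr G hG w ρ \ {κ} ⊆ {u | u ∈ BCtr G hG w ρ ∧ G.Adj κ u} := by
        rintro u ⟨huB, huκ⟩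
        exact ⟨huB, hstar u huB (by simpa using huκ)⟩
      have h1 : (BCtr G hG w ρ \ {κ}).ncard = (BCtr G hG w ρ).ncard - 1 :=
        Set.ncard_diff_singleton_of_mem hκB
      have h3 := Set.ncard_le_ncard hsub (Set.toFinite _)
      omega
    · rintro c' ⟨hc'B, hc'deg⟩
      by_contra hne
      have hc'adj : G.Adj κ c' := hstar c' hc'B hne
      have hsub : {u | u ∈ BCtr G hG w ρ ∧ G.Adj c' u} ⊆ {κ} := by
        rintro u ⟨huB, huadj⟩
        by_contra huκ
        have huadjκ : G.Adj κ u := hstar u huB huκ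
        have hp1 : (SimpleGraph.Walk.cons huadjκ SimpleGraph.Walk.nil : G.Walk κ u).IsPath := by
          simp [SimpleGraph.Walk.cons_isPath_iff, huadjκ.ne]
        have hp2 : (SimpleGraph.Walk.cons hc'adj
            (SimpleGraph.Walk.cons huadj SimpleGraph.Walk.nil) : G.Walk κ u).IsPath := by
          simp [SimpleGraph.Walk.cons_isPath_iff, huadj.ne, hc'adj.ne, huadjκ.ne,
            Ne.symm huκ]
        have heq := (isPath_eq_tPath hG hp1).trans (isPath_eq_tPath hG hp2).symm
        have hlen := congrArg SimpleGraph.Walk.length heq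
        simp at hlen
      have hle := Set.ncard_le_ncard hsub (Set.finite_singleton κ)
      rw [Set.ncard_singleton] at hle
      omega

end Postal
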